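/- Let M ~ Binomial(N−1, 1/2). Then (1/N) E[|M + 1 − N/2|] ≤ (1/N)(√(N−1)/2 + 1), and hence the average deviation incentive of the mean field policy in the N-player Pigou game (which equals T·(1/N)·E[max{N/2 − M − 1, M + 1 − N/2}] up to truncation at 0) tends to 0 at rate O(1/√N). -/

import Mathlib

open Finset Filter

private lemma aux_sum_choose (n : ℕ) : ∑ m ∈ range (n + 1), (n.choose m : ℝ) = 2 ^ n := by
  rw [← Nat.cast_sum, Nat.sum_range_choose]; push_cast; ring

private lemma aux_shift (n : ℕ) (f : ℕ → ℝ) :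
    ∑ m ∈ range (n + 2), (m : ℝ) * ((n + 1).choose m : ℝ) * f m
      = ((n : ℝ) + 1) * ∑ k ∈ range (n + 1), (n.choose k : ℝ) * f (k + 1) := by
  rw [Finset.sum_range_succ', Finset.mul_sum]
  simp only [Nat.cast_zero, zero_mul, add_zero]
  refine Finset.sum_congr rfl fun k _ => ?_
  have h : (n + 1) * n.choose k = (n + 1).choose (k + 1) * (k + 1) :=
    Nat.add_one_mul_choose_eq n k
  have h' : ((n : ℝ) + 1) * (n.choose k : ℝ)
      = ((n + 1).choose (k + 1) : ℝ) * ((k : ℝ) + 1) := by exact_mod_cast h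
  push_cast
  linear_combination f (k + 1) * h'.symm

private lemma aux_S1 (n : ℕ) :
    ∑ m ∈ range (n + 1), (m : ℝ) * (n.choose m : ℝ) = (n : ℝ) * 2 ^ n / 2 := by
  cases n with
  | zero => simp
  | succ n =>
    have := aux_shift n (fun _ => 1)
    simp only [mul_one] at this
    rw [this, aux_sum_choose]
    push_cast; ring

private lemma aux_S2 (n : ℕ) :
    ∑ m ∈ range (n + 1), (m : ℝ) * ((m : ℝ) - 1) * (n.choose m : ℝ)
      = (n : ℝ) * ((n : ℝ) - 1) * 2 ^ n / 4 := by
  cases n with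
  | zero => simp
  | succ n =>
    have h := aux_shift n (fun m => (m : ℝ) - 1)
    have e : ∑ m ∈ range (n + 2), (m : ℝ) * ((m : ℝ) - 1) * ((n + 1).choose m : ℝ)
        = ∑ m ∈ range (n + 2), (m : ℝ) * ((n + 1).choose m : ℝ) * ((m : ℝ) - 1) := by
      refine Finset.sum_congr rfl fun m _ => by ring
    rw [e, h]
    have e2 : ∑ k ∈ range (n + 1), (n.choose k : ℝ) * (((k : ℝ) + 1) - 1)
        = ∑ k ∈ range (n + 1), (k : ℝ) * (n.choose k : ℝ) := by
      refine Finset.sum_congr rfl fun k _ => by ring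
    have e3 : ∀ k, (n.choose k : ℝ) * ((((k : ℕ) + 1 : ℕ) : ℝ) - 1)
        = (k : ℝ) * (n.choose k : ℝ) := by intro k; push_cast; ring
    simp only [e3]
    rw [aux_S1]
    push_cast; ring

private lemma aux_var (n : ℕ) :
    ∑ m ∈ range (n + 1), (n.choose m : ℝ) * ((m : ℝ) - (n : ℝ) / 2) ^ 2
      = (n : ℝ) / 4 * 2 ^ n := by
  have e : ∀ m ∈ range (n + 1), (n.choose m : ℝ) * ((m : ℝ) - (n : ℝ) / 2) ^ 2
      = (m : ℝ) * ((m : ℝ) - 1) * (n.choose m : ℝ)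
        + (1 - (n : ℝ)) * ((m : ℝ) * (n.choose m : ℝ))
        + ((n : ℝ) ^ 2 / 4) * (n.choose m : ℝ) := fun m _ => by ring
  rw [Finset.sum_congr rfl e]
  rw [Finset.sum_add_distrib, Finset.sum_add_distrib, ← Finset.mul_sum, ← Finset.mul_sum,
    aux_S2, aux_S1, aux_sum_choose]
  ring

private lemma aux_abs_dev (n : ℕ) :
    ∑ m ∈ range (n + 1), ((n.choose m : ℝ) / 2 ^ n) * |(m : ℝ) - (n : ℝ) / 2|
      ≤ Real.sqrt n / 2 := by
  set p : ℕ → ℝ := fun m => (n.choose m : ℝ) / 2 ^ n with hp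
  have hp0 : ∀ m, 0 ≤ p m := fun m => by positivity
  have hsum1 : ∑ m ∈ range (n + 1), p m = 1 := by
    rw [hp, ← Finset.sum_div, aux_sum_choose, div_self (by positivity)]
  have hvar : ∑ m ∈ range (n + 1), p m * ((m : ℝ) - (n : ℝ) / 2) ^ 2 = (n : ℝ) / 4 := by
    have : ∑ m ∈ range (n + 1), p m * ((m : ℝ) - (n : ℝ) / 2) ^ 2
        = (∑ m ∈ range (n + 1), (n.choose m : ℝ) * ((m : ℝ) - (n : ℝ) / 2) ^ 2) / 2 ^ n := by
      rw [Finset.sum_div]; exact Finset.sum_congr rfl fun m _ => by rw [hp]; ring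
    rw [this, aux_var]; field_simp
  have key := Finset.sum_mul_sq_le_sq_mul_sq (range (n + 1))
    (fun m => Real.sqrt (p m)) (fun m => Real.sqrt (p m) * |(m : ℝ) - (n : ℝ) / 2|)
  have e1 : ∀ m ∈ range (n + 1),
      Real.sqrt (p m) * (Real.sqrt (p m) * |(m : ℝ) - (n : ℝ) / 2|)
        = p m * |(m : ℝ) - (n : ℝ) / 2| := fun m _ => by
    rw [← mul_assoc, Real.mul_self_sqrt (hp0 m)]
  have e2 : ∀ m ∈ range (n + 1), Real.sqrt (p m) ^ 2 = p m := fun m _ =>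
    Real.sq_sqrt (hp0 m)
  have e3 : ∀ m ∈ range (n + 1),
      (Real.sqrt (p m) * |(m : ℝ) - (n : ℝ) / 2|) ^ 2
        = p m * ((m : ℝ) - (n : ℝ) / 2) ^ 2 := fun m _ => by
    rw [mul_pow, Real.sq_sqrt (hp0 m), sq_abs]
  rw [Finset.sum_congr rfl e1, Finset.sum_congr rfl e2, Finset.sum_congr rfl e3,
    hsum1, hvar, one_mul] at key
  have hnn : 0 ≤ ∑ m ∈ range (n + 1), p m * |(m : ℝ) - (n : ℝ) / 2| :=
    Finset.sum_nonneg fun m _ => mul_nonneg (hp0 m) (abs_nonneg _)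
  have hle : ∑ m ∈ range (n + 1), p m * |(m : ℝ) - (n : ℝ) / 2| ≤ Real.sqrt ((n : ℝ) / 4) :=
    (Real.le_sqrt hnn (by positivity)).mpr key
  calc ∑ m ∈ range (n + 1), p m * |(m : ℝ) - (n : ℝ) / 2| ≤ Real.sqrt ((n : ℝ) / 4) := hle
    _ = Real.sqrt n / 2 := by
        rw [show ((n:ℝ)/4) = (n:ℝ) * (1/4) by ring, Real.sqrt_mul (by positivity),
          show ((1:ℝ)/4) = (1/2)^2 by norm_num, Real.sqrt_sq (by norm_num)]
        ring


private lemma aux_psum (n : ℕ) :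
    ∑ m ∈ range (n + 1), ((n.choose m : ℝ) / 2 ^ n) = 1 := by
  rw [← Finset.sum_div, aux_sum_choose, div_self (by positivity)]

private lemma aux_part1 (n : ℕ) :
    ∑ m ∈ range (n + 1), ((n.choose m : ℝ) / 2 ^ n) * |(m : ℝ) + 1 - ((n : ℝ) + 1) / 2|
      ≤ Real.sqrt n / 2 + 1 := by
  have step : ∑ m ∈ range (n + 1), ((n.choose m : ℝ) / 2 ^ n) * |(m : ℝ) + 1 - ((n : ℝ) + 1) / 2|
      ≤ ∑ m ∈ range (n + 1), ((n.choose m : ℝ) / 2 ^ n) * (|(m : ℝ) - (n : ℝ) / 2| + 1 / 2) := by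
    refine Finset.sum_le_sum fun m _ => mul_le_mul_of_nonneg_left ?_ (by positivity)
    have e : (m : ℝ) + 1 - ((n : ℝ) + 1) / 2 = ((m : ℝ) - (n : ℝ) / 2) + 1 / 2 := by ring
    rw [e]
    refine (abs_add_le _ _).trans ?_
    have h12 : |(1:ℝ)/2| = 1/2 := abs_of_nonneg (by norm_num)
    rw [h12]
  have split : ∑ m ∈ range (n + 1), ((n.choose m : ℝ) / 2 ^ n) * (|(m : ℝ) - (n : ℝ) / 2| + 1 / 2)
      = (∑ m ∈ range (n + 1), ((n.choose m : ℝ) / 2 ^ n) * |(m : ℝ) - (n : ℝ) / 2|)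
        + (1 / 2) * ∑ m ∈ range (n + 1), ((n.choose m : ℝ) / 2 ^ n) := by
    rw [Finset.mul_sum, ← Finset.sum_add_distrib]
    exact Finset.sum_congr rfl fun m _ => by ring
  calc ∑ m ∈ range (n + 1), ((n.choose m : ℝ) / 2 ^ n) * |(m : ℝ) + 1 - ((n : ℝ) + 1) / 2|
      ≤ _ := step
    _ = _ := split
    _ ≤ Real.sqrt n / 2 + (1 / 2) * 1 := by
        rw [aux_psum]
        exact add_le_add_left (aux_abs_dev n) _
    _ ≤ Real.sqrt n / 2 + 1 := by norm_num

/-- Let `M ~ Binomial(N−1, 1/2)`.  Then `(1/N)·E[|M + 1 − N/2|] ≤ (1/N)(√(N−1)/2 + 1)`, and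
consequently the average deviation incentive of the mean field policy in the `N`-player
Pigou game, `T·(1/N)·E[max{N/2 − M − 1, M + 1 − N/2}]`, tends to `0` as `N → ∞` (at rate
`O(1/√N)`).  Expectations are written as sums over the binomial distribution. -/
theorem pigou_deviation_incentive_sqrt_rate (T : ℝ) (hT : 0 < T) :
    (∀ N : ℕ, 1 ≤ N →
      (1 / (N : ℝ)) * ∑ m ∈ Finset.range N, (((N - 1).choose m : ℝ) / 2 ^ (N - 1)) *
          |(m : ℝ) + 1 - (N : ℝ) / 2| ≤
        (1 / (N : ℝ)) * (Real.sqrt ((N : ℝ) - 1) / 2 + 1)) ∧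
    Tendsto (fun N : ℕ =>
        T * ((1 / (N : ℝ)) * ∑ m ∈ Finset.range N, (((N - 1).choose m : ℝ) / 2 ^ (N - 1)) *
          max ((N : ℝ) / 2 - (m : ℝ) - 1) ((m : ℝ) + 1 - (N : ℝ) / 2)))
      atTop (nhds 0) := by
  have absmax : ∀ (N : ℕ) (m : ℕ),
      max ((N : ℝ) / 2 - (m : ℝ) - 1) ((m : ℝ) + 1 - (N : ℝ) / 2) = |(m : ℝ) + 1 - (N : ℝ) / 2| := by
    intro N m
    rw [abs_eq_max_neg, max_comm]
    congr 1
    ring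
  have part1 : ∀ N : ℕ, 1 ≤ N →
      (1 / (N : ℝ)) * ∑ m ∈ Finset.range N, (((N - 1).choose m : ℝ) / 2 ^ (N - 1)) *
          |(m : ℝ) + 1 - (N : ℝ) / 2| ≤
        (1 / (N : ℝ)) * (Real.sqrt ((N : ℝ) - 1) / 2 + 1) := by
    intro N hN
    have hN1 : N = (N - 1) + 1 := (Nat.succ_pred_eq_of_pos hN).symm
    set n := N - 1 with hn
    rw [hN1]
    have e1 : ((n + 1 : ℕ) : ℝ) - 1 = (n : ℝ) := by push_cast; ring
    have e2 : ((n + 1 : ℕ) : ℝ) = (n : ℝ) + 1 := by push_cast; ring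
    rw [e1, e2]
    refine mul_le_mul_of_nonneg_left ?_ (by positivity)
    exact aux_part1 n
  refine ⟨part1, ?_⟩
  have heq : ∀ N : ℕ,
      T * ((1 / (N : ℝ)) * ∑ m ∈ Finset.range N, (((N - 1).choose m : ℝ) / 2 ^ (N - 1)) *
          max ((N : ℝ) / 2 - (m : ℝ) - 1) ((m : ℝ) + 1 - (N : ℝ) / 2))
        = T * ((1 / (N : ℝ)) * ∑ m ∈ Finset.range N, (((N - 1).choose m : ℝ) / 2 ^ (N - 1)) *
          |(m : ℝ) + 1 - (N : ℝ) / 2|) := by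
    intro N
    congr 2
    exact Finset.sum_congr rfl fun m _ => by rw [absmax]
  -- limit of the upper bound
  have hsqrtTop : Tendsto Real.sqrt atTop atTop := by
    apply tendsto_atTop_atTop_of_monotone' (fun a b h => Real.sqrt_le_sqrt h)
    intro h
    obtain ⟨B, hB⟩ := h
    exact absurd (hB (Set.mem_range_self ((B + 1) ^ 2))) (by
      simp only [not_le]
      nlinarith [Real.sqrt_nonneg ((B + 1) ^ 2 : ℝ),
        Real.sq_sqrt (by positivity : (0:ℝ) ≤ ((B + 1) ^ 2 : ℝ))])
  have hsub : Tendsto (fun N : ℕ => (N : ℝ) - 1) atTop atTop := by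
    have := tendsto_atTop_add_const_right atTop (-1 : ℝ) tendsto_natCast_atTop_atTop
    simpa [sub_eq_add_neg] using this
  have hsq : Tendsto (fun N : ℕ => Real.sqrt ((N : ℝ) - 1)) atTop atTop := hsqrtTop.comp hsub
  have hinv : Tendsto (fun N : ℕ => (Real.sqrt ((N : ℝ) - 1))⁻¹) atTop (nhds 0) :=
    hsq.inv_tendsto_atTop
  have hratio : Tendsto (fun N : ℕ => Real.sqrt ((N : ℝ) - 1) / (N : ℝ)) atTop (nhds 0) := by
    apply tendsto_of_tendsto_of_tendsto_of_le_of_le' tendsto_const_nhds hinv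
    · filter_upwards [eventually_ge_atTop 1] with N hN
      positivity
    · filter_upwards [eventually_ge_atTop 2] with N hN
      have hN2 : (2 : ℝ) ≤ (N : ℝ) := by exact_mod_cast hN
      have h1 : (1 : ℝ) ≤ (N : ℝ) - 1 := by linarith
      have hs : (1 : ℝ) ≤ Real.sqrt ((N : ℝ) - 1) := by
        have := Real.sqrt_le_sqrt h1
        rwa [Real.sqrt_one] at this
      rw [div_le_iff₀ (by linarith), inv_mul_eq_div, le_div_iff₀ (by linarith)]
      have : Real.sqrt ((N : ℝ) - 1) * Real.sqrt ((N : ℝ) - 1) = (N : ℝ) - 1 :=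
        Real.mul_self_sqrt (by linarith)
      nlinarith
  have h1N : Tendsto (fun N : ℕ => 1 / (N : ℝ)) atTop (nhds 0) :=
    tendsto_one_div_atTop_nhds_zero_nat
  have hbound : Tendsto (fun N : ℕ => T * ((1 / (N : ℝ)) * (Real.sqrt ((N : ℝ) - 1) / 2 + 1)))
      atTop (nhds 0) := by
    have : Tendsto (fun N : ℕ => T * (Real.sqrt ((N : ℝ) - 1) / (N : ℝ) / 2 + 1 / (N : ℝ)))
        atTop (nhds (T * (0 / 2 + 0))) :=
      Tendsto.const_mul T ((hratio.div_const 2).add h1N)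
    simp only [zero_div, add_zero, mul_zero] at this
    refine this.congr fun N => ?_
    by_cases hN : (N : ℝ) = 0
    · rw [hN]; simp
    · field_simp
  apply tendsto_of_tendsto_of_tendsto_of_le_of_le' tendsto_const_nhds hbound
  · refine Eventually.of_forall fun N => ?_
    rw [heq]
    refine mul_nonneg hT.le (mul_nonneg (by positivity) (Finset.sum_nonneg fun m _ => ?_))
    positivity
  · filter_upwards [eventually_ge_atTop 1] with N hN
    rw [heq]
    refine mul_le_mul_of_nonneg_left ?_ hT.le
    exact part1 N hN
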